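/- Under <_pot, let H contain all Koszul syzygy lead terms lt(π α)·e_k for α of index < k, where e_k is the latest index. If α, β ∈ R^m with ind(α) < ind(β) = k and the S-pair spair(α,β) satisfies the product criterion (lm(π α) and lm(π β) coprime), then the signature of spair(α,β) is divisible by the signature of some element of H; i.e., the S-pair is rewritable with respect to H. -/
import Mathlib


open MvPolynomial
open scoped MonomialOrder

namespace GB

variable {σ K : Type*} [Field K]

/-- The leading monomial (exponent vector) of `p` with respect to the monomial order `m`. -/
noncomputable def lm (m : MonomialOrder σ) (p : MvPolynomial σ K) : σ →₀ ℕ :=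
  m.toSyn.symm (p.support.sup m.toSyn)

/-- The leading coefficient of `p` with respect to `m`. -/
noncomputable def lc (m : MonomialOrder σ) (p : MvPolynomial σ K) : K :=
  p.coeff (lm m p)

/-- The leading term of `p` with respect to `m`. -/
noncomputable def lt (m : MonomialOrder σ) (p : MvPolynomial σ K) : MvPolynomial σ K :=
  monomial (lm m p) (lc m p)

/-- The (monic) least common multiple of two monomials, as pointwise sup of exponents. -/
noncomputable def mlcm (a b : σ →₀ ℕ) : σ →₀ ℕ := a ⊔ b

/-- The S-polynomial `S(f,g) = (λ/lt f)·f − (λ/lt g)·g` where `λ = lcm(lm f, lm g)`. -/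
noncomputable def sPoly (m : MonomialOrder σ) (f g : MvPolynomial σ K) : MvPolynomial σ K :=
  monomial (mlcm (lm m f) (lm m g) - lm m f) (lc m f)⁻¹ * f
    - monomial (mlcm (lm m f) (lm m g) - lm m g) (lc m g)⁻¹ * g

variable {n : ℕ}

/-- The map `π : R^n → R`, `α ↦ Σ αᵢ fᵢ`, determined by the input polynomials `F`. -/
noncomputable def piMap (F α : Fin n → MvPolynomial σ K) : MvPolynomial σ K :=
  ∑ i, α i * F i

/-- The `i`-th standard basis vector of `R^n`. -/
noncomputable def eV (i : Fin n) : Fin n → MvPolynomial σ K :=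
  fun k => if k = i then 1 else 0

/-- Scalar multiplication of a module element by the monomial with exponent `a` and
coefficient `c`. -/
noncomputable def mulV (a : σ →₀ ℕ) (c : K) (α : Fin n → MvPolynomial σ K) :
    Fin n → MvPolynomial σ K :=
  fun i => monomial a c * α i

/-- The S-pair `spair(α,β) = (λ/lt(πα))·α − (λ/lt(πβ))·β`, `λ = lcm(lm(πα), lm(πβ))`. -/
noncomputable def spair (m : MonomialOrder σ) (F α β : Fin n → MvPolynomial σ K) :
    Fin n → MvPolynomial σ K :=
  fun i =>
    monomial (mlcm (lm m (piMap F α)) (lm m (piMap F β)) - lm m (piMap F α))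
        (lc m (piMap F α))⁻¹ * α i
      - monomial (mlcm (lm m (piMap F α)) (lm m (piMap F β)) - lm m (piMap F β))
        (lc m (piMap F β))⁻¹ * β i

/-- A module monomial order on the module monomials `a·eᵢ` of `R^n` (encoded as pairs `(a,i)`),
compatible with the monomial order `m`: a well-founded linear order, compatible with monomial
multiplication, such that `a ≼[m] b` iff `a·eᵢ ≤ b·eᵢ` for all `i`. -/
structure ModOrder (σ : Type*) (n : ℕ) (m : MonomialOrder σ) where
  /-- the synonym type carrying the order -/
  syn : Type*
  /-- `syn` is linearly ordered -/
  lin : LinearOrder syn := by infer_instance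
  /-- identification of module monomials with `syn` -/
  toSyn : ((σ →₀ ℕ) × Fin n) ≃ syn
  /-- the order is a well-order -/
  wf : WellFounded fun x y : syn => x < y
  /-- compatibility with monomial multiplication -/
  smul_compat : ∀ (c : σ →₀ ℕ) (S T : (σ →₀ ℕ) × Fin n),
    toSyn S ≤ toSyn T → toSyn (c + S.1, S.2) ≤ toSyn (c + T.1, T.2)
  /-- compatibility with the monomial order `m` -/
  compat : ∀ (a b : σ →₀ ℕ) (i : Fin n), toSyn (a, i) ≤ toSyn (b, i) ↔ a ≼[m] b

attribute [instance] ModOrder.lin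

/-- The set of module terms (module monomials with nonzero coefficient) of `α ∈ R^n`. -/
noncomputable def msupport (α : Fin n → MvPolynomial σ K) : Finset ((σ →₀ ℕ) × Fin n) := by
  classical
  exact Finset.univ.biUnion fun i => (α i).support.image fun a => (a, i)

/-- The signature of `α`: its maximal module term w.r.t. `mo` (`⊥` for `α = 0`). -/
noncomputable def sig {m : MonomialOrder σ} (mo : ModOrder σ n m)
    (α : Fin n → MvPolynomial σ K) : WithBot mo.syn :=
  ((msupport α).image mo.toSyn).max

/-- `T` is the signature of `α` (as a module monomial). -/
def IsSigMon {m : MonomialOrder σ} (mo : ModOrder σ n m)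
    (α : Fin n → MvPolynomial σ K) (T : (σ →₀ ℕ) × Fin n) : Prop :=
  sig mo α = (mo.toSyn T : WithBot mo.syn)

/-- One 𝔰-reduction step of `α` by some `β ∈ B`: a monomial multiple `b·β` whose polynomial
lead term equals (and cancels) a term of `π α` and with `s(b·β) ≤ s(α)` is subtracted. -/
def SRedStep (m : MonomialOrder σ) (mo : ModOrder σ n m) (F : Fin n → MvPolynomial σ K)
    (B : Set (Fin n → MvPolynomial σ K)) (α α' : Fin n → MvPolynomial σ K) : Prop :=
  ∃ β ∈ B, ∃ (a : σ →₀ ℕ) (c : K), c ≠ 0 ∧ piMap F β ≠ 0 ∧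
    (a + lm m (piMap F β)) ∈ (piMap F α).support ∧
    c * lc m (piMap F β) = (piMap F α).coeff (a + lm m (piMap F β)) ∧
    sig mo (mulV a c β) ≤ sig mo α ∧
    α' = fun i => α i - monomial a c * β i

/-- A regular 𝔰-reduction step: as `SRedStep`, but with `s(b·β) < s(α)`. -/
def RegSRedStep (m : MonomialOrder σ) (mo : ModOrder σ n m) (F : Fin n → MvPolynomial σ K)
    (B : Set (Fin n → MvPolynomial σ K)) (α α' : Fin n → MvPolynomial σ K) : Prop :=
  ∃ β ∈ B, ∃ (a : σ →₀ ℕ) (c : K), c ≠ 0 ∧ piMap F β ≠ 0 ∧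
    (a + lm m (piMap F β)) ∈ (piMap F α).support ∧
    c * lc m (piMap F β) = (piMap F α).coeff (a + lm m (piMap F β)) ∧
    sig mo (mulV a c β) < sig mo α ∧
    α' = fun i => α i - monomial a c * β i

/-- `α` 𝔰-reduces to zero w.r.t. `B`: a chain of 𝔰-reduction steps reaches a syzygy. -/
def SRedToZero (m : MonomialOrder σ) (mo : ModOrder σ n m) (F : Fin n → MvPolynomial σ K)
    (B : Set (Fin n → MvPolynomial σ K)) (α : Fin n → MvPolynomial σ K) : Prop :=
  ∃ γ, Relation.ReflTransGen (SRedStep m mo F B) α γ ∧ piMap F γ = 0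

/-- `α` regular 𝔰-reduces to zero w.r.t. `B`: a chain of regular 𝔰-reduction steps reaches
a syzygy. -/
def RegSRedToZero (m : MonomialOrder σ) (mo : ModOrder σ n m) (F : Fin n → MvPolynomial σ K)
    (B : Set (Fin n → MvPolynomial σ K)) (α : Fin n → MvPolynomial σ K) : Prop :=
  ∃ γ, Relation.ReflTransGen (RegSRedStep m mo F B) α γ ∧ piMap F γ = 0

/-- `B` is a signature Gröbner basis up to signature `T`: every `γ` with `s(γ) < T`
𝔰-reduces to zero w.r.t. `B`. -/
def SigGBUpTo (m : MonomialOrder σ) (mo : ModOrder σ n m) (F : Fin n → MvPolynomial σ K)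
    (B : Set (Fin n → MvPolynomial σ K)) (T : WithBot mo.syn) : Prop :=
  ∀ γ : Fin n → MvPolynomial σ K, sig mo γ < T → SRedToZero m mo F B γ

/-- Divisibility of module monomials: same index, and the exponent divides. -/
def ModDvd {N : ℕ} (S T : (σ →₀ ℕ) × Fin N) : Prop :=
  S.2 = T.2 ∧ ∃ w : σ →₀ ℕ, S.1 + w = T.1


section Aux

variable {σ K : Type*} [Field K] {n : ℕ} {m : MonomialOrder σ}

lemma mem_msupport_iff {α : Fin n → MvPolynomial σ K} {a : σ →₀ ℕ} {i : Fin n} :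
    (a, i) ∈ msupport α ↔ a ∈ (α i).support := by
  classical
  simp only [msupport, Finset.mem_biUnion, Finset.mem_image, Finset.mem_univ, true_and]
  constructor
  · rintro ⟨j, b, hb, heq⟩
    injection heq with h1 h2
    subst h1; subst h2; exact hb
  · intro h; exact ⟨i, a, h, rfl⟩

lemma isSigMon_mem {mo : ModOrder σ n m} {α : Fin n → MvPolynomial σ K}
    {S : (σ →₀ ℕ) × Fin n} (h : IsSigMon mo α S) : S ∈ msupport α := by
  have hmem : mo.toSyn S ∈ (msupport α).image mo.toSyn := Finset.mem_of_max h
  obtain ⟨T, hT, hTe⟩ := Finset.mem_image.mp hmem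
  exact (mo.toSyn.injective hTe) ▸ hT

lemma isSigMon_le {mo : ModOrder σ n m} {α : Fin n → MvPolynomial σ K}
    {S T : (σ →₀ ℕ) × Fin n} (h : IsSigMon mo α S) (hT : T ∈ msupport α) :
    mo.toSyn T ≤ mo.toSyn S := by
  have h1 : (mo.toSyn T : WithBot mo.syn) ≤ sig mo α :=
    Finset.le_max (Finset.mem_image_of_mem _ hT)
  rw [h] at h1
  exact WithBot.coe_le_coe.mp h1

lemma lm_mem_support {p : MvPolynomial σ K} (hp : p ≠ 0) : lm m p ∈ p.support := by
  obtain ⟨a, ha, he⟩ := p.support.exists_mem_eq_sup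
    (MvPolynomial.support_nonempty.mpr hp) m.toSyn
  rw [lm, he]
  simpa using ha

lemma lc_ne_zero {p : MvPolynomial σ K} (hp : p ≠ 0) : lc m p ≠ 0 :=
  MvPolynomial.mem_support_iff.mp (lm_mem_support hp)

lemma comp_eq_zero {mo : ModOrder σ n m}
    (hpot : ∀ S T : (σ →₀ ℕ) × Fin n,
      mo.toSyn S < mo.toSyn T ↔ (S.2 < T.2 ∨ (S.2 = T.2 ∧ (S.1 ≺[m] T.1))))
    {α : Fin n → MvPolynomial σ K} {S : (σ →₀ ℕ) × Fin n}
    (h : IsSigMon mo α S) {j : Fin n} (hj : S.2 < j) : α j = 0 := by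
  by_contra hne
  obtain ⟨a, ha⟩ := MvPolynomial.support_nonempty.mpr hne
  have hle := isSigMon_le h (mem_msupport_iff.mpr ha)
  exact absurd hle (not_le.mpr ((hpot S (a, j)).mpr (Or.inl hj)))

end Aux

/-- **Product criterion S-pairs of mixed index are rewritable under `<_pot`.** Let `mo` be the
position-over-term order and let `H` contain, for every `γ` of index `< k` with `π γ ≠ 0`, an
element with (Koszul) signature `lt(π γ)·e_k`. If `ind(α) < ind(β) = k` and `spair(α,β)`
satisfies the product criterion, then the signature of `spair(α,β)` is divisible by the
signature of some element of `H`, i.e. the S-pair is rewritable w.r.t. `H`. -/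
theorem pot_product_criterion_rewritable (m : MonomialOrder σ) (mo : ModOrder σ n m)
    (hpot : ∀ S T : (σ →₀ ℕ) × Fin n,
      mo.toSyn S < mo.toSyn T ↔ (S.2 < T.2 ∨ (S.2 = T.2 ∧ (S.1 ≺[m] T.1))))
    (F : Fin n → MvPolynomial σ K) (k : Fin n)
    (H : Set (Fin n → MvPolynomial σ K))
    (hH : ∀ γ : Fin n → MvPolynomial σ K, ∀ Sγ : (σ →₀ ℕ) × Fin n,
      IsSigMon mo γ Sγ → Sγ.2 < k → piMap F γ ≠ 0 →
      ∃ τ ∈ H, IsSigMon mo τ (lm m (piMap F γ), k))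
    (α β : Fin n → MvPolynomial σ K)
    (hα : piMap F α ≠ 0) (hβ : piMap F β ≠ 0)
    (Sα Sβ : (σ →₀ ℕ) × Fin n)
    (hSα : IsSigMon mo α Sα) (hSβ : IsSigMon mo β Sβ)
    (hind : Sα.2 < Sβ.2) (hk : Sβ.2 = k)
    (hcop : mlcm (lm m (piMap F α)) (lm m (piMap F β))
      = lm m (piMap F α) + lm m (piMap F β)) :
    ∃ τ ∈ H, ∃ Sτ Ssp : (σ →₀ ℕ) × Fin n,
      IsSigMon mo τ Sτ ∧ IsSigMon mo (spair m F α β) Ssp ∧ ModDvd Sτ Ssp := by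
  classical
  obtain ⟨sb, ib⟩ := Sβ
  simp only at hind hk
  subst hk
  obtain ⟨τ, hτH, hτ⟩ := hH α Sα hSα hind hα
  have hαk : α ib = 0 := comp_eq_zero hpot hSα hind
  refine ⟨τ, hτH, (lm m (piMap F α), ib), (lm m (piMap F α) + sb, ib), hτ, ?_, rfl, sb, rfl⟩
  set A := piMap F α with hA
  set B := piMap F β with hB
  have hsubB : mlcm (lm m A) (lm m B) - lm m B = lm m A := by
    rw [hcop]; exact add_tsub_cancel_right _ _
  have hβmem : sb ∈ (β ib).support := mem_msupport_iff.mp (isSigMon_mem hSβ)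
  have hcoeff : (spair m F α β ib).coeff (lm m A + sb) ≠ 0 := by
    have hsp : spair m F α β ib = - (monomial (lm m A) (lc m B)⁻¹ * β ib) := by
      simp [spair, hαk, hsubB, ← hA, ← hB]
    rw [hsp, MvPolynomial.coeff_neg, MvPolynomial.coeff_monomial_mul]
    simp only [neg_ne_zero]
    exact mul_ne_zero (inv_ne_zero (lc_ne_zero hβ)) (MvPolynomial.mem_support_iff.mp hβmem)
  have hub : ∀ T ∈ msupport (spair m F α β), mo.toSyn T ≤ mo.toSyn (lm m A + sb, ib) := by
    rintro ⟨a, j⟩ hT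
    have ha : a ∈ (spair m F α β j).support := mem_msupport_iff.mp hT
    have hsup := MvPolynomial.support_sub σ
      (monomial (mlcm (lm m A) (lm m B) - lm m A) (lc m A)⁻¹ * α j)
      (monomial (mlcm (lm m A) (lm m B) - lm m B) (lc m B)⁻¹ * β j)
    have ha' := hsup (by simpa [spair, ← hA, ← hB] using ha)
    rcases Finset.mem_union.mp ha' with h1 | h2
    · rw [MvPolynomial.mem_support_iff, MvPolynomial.coeff_monomial_mul'] at h1
      split_ifs at h1 with hle
      · have hb : a - (mlcm (lm m A) (lm m B) - lm m A) ∈ (α j).support :=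
          MvPolynomial.mem_support_iff.mpr fun h => h1 (by rw [h, mul_zero])
        have hle1 := isSigMon_le hSα (mem_msupport_iff.mpr hb)
        have hjle : j ≤ Sα.2 := by
          by_contra hlt
          exact absurd hle1 (not_le.mpr ((hpot _ _).mpr (Or.inl (lt_of_not_ge hlt))))
        exact le_of_lt ((hpot _ _).mpr (Or.inl (lt_of_le_of_lt hjle hind)))
      · exact absurd rfl h1
    · rw [MvPolynomial.mem_support_iff, MvPolynomial.coeff_monomial_mul', hsubB] at h2
      split_ifs at h2 with hle
      · have hb : a - lm m A ∈ (β j).support :=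
          MvPolynomial.mem_support_iff.mpr fun h => h2 (by rw [h, mul_zero])
        have hle2 := isSigMon_le hSβ (mem_msupport_iff.mpr hb)
        have hsc := mo.smul_compat (lm m A) (a - lm m A, j) (sb, ib) hle2
        rwa [add_tsub_cancel_of_le hle] at hsc
      · exact absurd rfl h2
  have hmem : (lm m A + sb, ib) ∈ msupport (spair m F α β) :=
    mem_msupport_iff.mpr (MvPolynomial.mem_support_iff.mpr hcoeff)
  unfold IsSigMon sig
  apply le_antisymm
  · apply Finset.max_le
    intro s hs
    obtain ⟨T, hT, rfl⟩ := Finset.mem_image.mp hs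
    exact_mod_cast hub T hT
  · exact Finset.le_max (Finset.mem_image_of_mem _ hmem)


end GB
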